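/- Let ε > 0 and for each dimension d choose r₂(d) = (2/√π)·Γ(d/2 + 1)^{1/d}, so that the Euclidean ball B₂(r₂(d)) in ℝ^d has the same volume as the ℓ∞ ball B∞(1) (the cube [−1,1]^d). Then the fraction Vol(B₂(r₂(d)) ∩ B∞(1)) / Vol(B∞(1)) tends to 0 as d → ∞; moreover for d large enough it is bounded above by exp(−(r₂(d)² − d/3)²/d). -/

import Mathlib

open MeasureTheory
open scoped BigOperators ENNReal
open Filter

/-- The radius `r₂(d) = (2/√π)·Γ(d/2 + 1)^{1/d}` making the Euclidean ball in `ℝ^d`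
    have the same volume as the cube `[−1,1]^d`. -/
noncomputable def r2 (d : ℕ) : ℝ :=
  (2 / Real.sqrt Real.pi) * Real.Gamma ((d : ℝ) / 2 + 1) ^ ((1 : ℝ) / d)

/-- The fraction of the volume of the cube `[−1,1]^d` occupied by its intersection with
    the Euclidean ball of radius `r₂(d)`. -/
noncomputable def volRatio (d : ℕ) : ℝ≥0∞ :=
  volume {x : Fin d → ℝ | (∑ i, x i ^ 2) ≤ r2 d ^ 2 ∧ ∀ i, |x i| ≤ 1} /
    volume {x : Fin d → ℝ | ∀ i, |x i| ≤ 1}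


lemma exp_neg_quad {l : ℝ} (h0 : 0 ≤ l) (h1 : l ≤ 1) :
    Real.exp (-l) ≤ 1 - l + (13/18) * l^2 := by
  have hb := Real.exp_bound (x := -l) (by rwa [abs_neg, abs_of_nonneg h0]) (n := 3) (by norm_num)
  rw [abs_neg, abs_of_nonneg h0] at hb
  have hsum : ∑ m ∈ Finset.range 3, (-l) ^ m / m.factorial = 1 - l + l^2/2 := by
    simp [Finset.sum_range_succ]
    ring
  rw [hsum] at hb
  have h2 : (((3:ℕ).succ : ℝ) / (((3:ℕ).factorial : ℝ) * (3:ℕ))) = 2/9 := by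
    norm_num [Nat.factorial]
  rw [h2] at hb
  have h3 : l^3 ≤ l^2 := by nlinarith
  have := abs_sub_le_iff.mp hb
  nlinarith [this.1]

lemma chernoff_scalar {d : ℕ} (hd : 1 ≤ d) {a : ℝ} (ha0 : 0 ≤ a) (ha : a ≤ (d:ℝ)/3) :
    Real.exp (2*((d:ℝ)/3 - a)/d * a) *
      (1 + (Real.exp (-(2*((d:ℝ)/3 - a)/d)) - 1)/3) ^ d
      ≤ Real.exp (-(a - (d:ℝ)/3)^2 / d) := by
  have hdpos : (0:ℝ) < d := by exact_mod_cast hd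
  set t : ℝ := (d:ℝ)/3 - a with ht
  set l : ℝ := 2*t/d with hl
  have ht0 : 0 ≤ t := by simp [ht]; linarith
  have hl0 : 0 ≤ l := by positivity
  have hl1 : l ≤ 1 := by
    rw [hl, div_le_one hdpos]; simp only [ht]; linarith
  have hexp := exp_neg_quad hl0 hl1
  have hq0 : 0 ≤ 1 + (Real.exp (-l) - 1)/3 := by
    have := Real.exp_pos (-l); linarith
  have hq : 1 + (Real.exp (-l) - 1)/3 ≤ Real.exp ((Real.exp (-l) - 1)/3) := by
    have := Real.add_one_le_exp ((Real.exp (-l) - 1)/3); linarith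
  calc Real.exp (l * a) * (1 + (Real.exp (-l) - 1)/3) ^ d
      ≤ Real.exp (l * a) * (Real.exp ((Real.exp (-l) - 1)/3)) ^ d := by
        exact mul_le_mul_of_nonneg_left (pow_le_pow_left₀ hq0 hq d) (Real.exp_pos _).le
    _ = Real.exp (l * a + d * ((Real.exp (-l) - 1)/3)) := by
        rw [← Real.exp_nat_mul, ← Real.exp_add]
    _ ≤ Real.exp (-(a - (d:ℝ)/3)^2 / d) := by
        apply Real.exp_le_exp.mpr
        have key : Real.exp (-l) - 1 ≤ -l + (13/18) * l^2 := by linarith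
        have h4 : l * a + (d:ℝ) * ((Real.exp (-l) - 1)/3) ≤
            l * a + (d:ℝ) * ((-l + (13/18)*l^2)/3) := by
          apply add_le_add_right
          apply mul_le_mul_of_nonneg_left _ hdpos.le
          linarith
        refine h4.trans ?_
        have hsub : -(a - (d:ℝ)/3)^2 = -t^2 := by rw [ht]; ring
        have ha' : a = (d:ℝ)/3 - t := by rw [ht]; ring
        rw [hsub, hl, ha']
        have hd0 : (d:ℝ) ≠ 0 := hdpos.ne'
        have expand : 2 * t / ↑d * (↑d / 3 - t) + ↑d * ((-(2 * t / ↑d) + 13 / 18 * (2 * t / ↑d) ^ 2) / 3)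
            = -(28/27) * (t^2/ ↑d) := by
          field_simp
          ring
        rw [expand, neg_div]
        have : 0 ≤ t^2 / (d:ℝ) := by positivity
        linarith


-- Section 3: one-dimensional integral bound
lemma integral_exp_le {l : ℝ} (hl : 0 ≤ l) :
    ∫ s in Set.Icc (-1:ℝ) 1, Real.exp (-l * s^2)
      ≤ 2 + (Real.exp (-l) - 1) * (2/3) := by
  have hcont : Continuous fun s : ℝ => Real.exp (-l * s^2) := by fun_prop
  have hcont2 : Continuous fun s : ℝ => 1 + (Real.exp (-l) - 1) * s^2 := by fun_prop
  have hmono : ∫ s in Set.Icc (-1:ℝ) 1, Real.exp (-l * s^2)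
      ≤ ∫ s in Set.Icc (-1:ℝ) 1, (1 + (Real.exp (-l) - 1) * s^2) := by
    apply setIntegral_mono_on (hcont.integrableOn_Icc) (hcont2.integrableOn_Icc)
      measurableSet_Icc
    intro s hs
    obtain ⟨hs1, hs2⟩ := hs
    have hs0 : 0 ≤ s^2 := sq_nonneg s
    have hs1' : s^2 ≤ 1 := by nlinarith
    have hcv := convexOn_exp.2 (Set.mem_univ (0:ℝ)) (Set.mem_univ (-l))
      (by linarith : (0:ℝ) ≤ 1 - s^2) hs0 (by ring)
    simp only [smul_eq_mul, mul_zero, zero_add, Real.exp_zero, mul_one] at hcv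
    calc Real.exp (-l * s^2) = Real.exp (s^2 * -l) := by rw [mul_comm]
      _ ≤ 1 - s^2 + s^2 * Real.exp (-l) := hcv
      _ = 1 + (Real.exp (-l) - 1) * s^2 := by ring
  refine hmono.trans ?_
  have heq : ∫ s in Set.Icc (-1:ℝ) 1, (1 + (Real.exp (-l) - 1) * s^2)
      = ∫ s in (-1:ℝ)..1, (1 + (Real.exp (-l) - 1) * s^2) := by
    rw [intervalIntegral.integral_of_le (by norm_num : (-1:ℝ) ≤ 1),
      integral_Icc_eq_integral_Ioc]
  rw [heq]
  rw [intervalIntegral.integral_add (intervalIntegrable_const)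
    ((intervalIntegral.intervalIntegrable_pow 2).const_mul _)]
  rw [intervalIntegral.integral_const_mul, integral_pow]
  norm_num

-- Section 4: cube volume
lemma cube_volume (d : ℕ) :
    volume {x : Fin d → ℝ | ∀ i, |x i| ≤ 1} = ENNReal.ofReal 2 ^ d := by
  have hset : {x : Fin d → ℝ | ∀ i, |x i| ≤ 1}
      = Set.pi Set.univ (fun _ : Fin d => Set.Icc (-1:ℝ) 1) := by
    ext x
    simp only [Set.mem_setOf_eq, Set.mem_univ_pi, Set.mem_Icc, abs_le]
  rw [hset, volume_pi_pi]
  simp [Real.volume_Icc]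
  norm_num

-- Section 2: numerator bound
lemma vol_num_le (d : ℕ) {l a : ℝ} (hl : 0 ≤ l) :
    volume {x : Fin d → ℝ | (∑ i, x i ^ 2) ≤ a ∧ ∀ i, |x i| ≤ 1}
      ≤ ENNReal.ofReal (Real.exp (l * a) *
          (∫ s in Set.Icc (-1:ℝ) 1, Real.exp (-l * s^2)) ^ d) := by
  set g : ℝ → ℝ := (Set.Icc (-1:ℝ) 1).indicator (fun s => Real.exp (-l * s^2)) with hg
  have hgmeas : Measurable g :=
    (Measurable.indicator (by fun_prop) measurableSet_Icc)
  have hgnn : ∀ s, 0 ≤ g s := by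
    intro s
    apply Set.indicator_nonneg
    intro y _; exact (Real.exp_pos _).le
  have hgint : Integrable g :=
    (Continuous.integrableOn_Icc (by fun_prop)).integrable_indicator measurableSet_Icc
  set h : (Fin d → ℝ) → ℝ := fun x => Real.exp (l * a) * ∏ i, g (x i) with hh
  have hhint : Integrable h :=
    (Integrable.fintype_prod (𝕜 := ℝ) (f := fun _ : Fin d => g) fun _ => hgint).const_mul _
  have hhnn : ∀ x, 0 ≤ h x := by
    intro x
    exact mul_nonneg (Real.exp_pos _).le (Finset.prod_nonneg fun i _ => hgnn _)
  have hhmeas : Measurable fun x : Fin d → ℝ => ENNReal.ofReal (h x) := by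
    apply ENNReal.measurable_ofReal.comp
    exact (Finset.measurable_prod Finset.univ
      (fun i _ => hgmeas.comp (measurable_pi_apply i))).const_mul _
  have hsub : {x : Fin d → ℝ | (∑ i, x i ^ 2) ≤ a ∧ ∀ i, |x i| ≤ 1}
      ⊆ {x : Fin d → ℝ | 1 ≤ ENNReal.ofReal (h x)} := by
    intro x ⟨hx1, hx2⟩
    have hgx : ∀ i, g (x i) = Real.exp (-l * (x i)^2) := fun i =>
      Set.indicator_of_mem (by simpa [Set.mem_Icc, ← abs_le] using hx2 i) _
    have : h x = Real.exp (l * a + ∑ i, (-l * (x i)^2)) := by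
      rw [hh, Real.exp_add, Real.exp_sum]
      simp only [hgx]
    simp only [Set.mem_setOf_eq, this]
    rw [ENNReal.one_le_ofReal]
    rw [← Real.exp_zero]
    apply Real.exp_le_exp.mpr
    have : ∑ i, (-l * (x i)^2) = -l * ∑ i, (x i)^2 := by rw [Finset.mul_sum]
    rw [this]
    nlinarith [mul_le_mul_of_nonneg_left hx1 hl]
  calc volume {x : Fin d → ℝ | (∑ i, x i ^ 2) ≤ a ∧ ∀ i, |x i| ≤ 1}
      ≤ volume {x : Fin d → ℝ | 1 ≤ ENNReal.ofReal (h x)} := measure_mono hsub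
    _ ≤ ∫⁻ x, ENNReal.ofReal (h x) := by
        simpa using mul_meas_ge_le_lintegral₀ hhmeas.aemeasurable 1
    _ = ENNReal.ofReal (∫ x, h x) := by
        rw [ofReal_integral_eq_lintegral_ofReal hhint
          (Filter.Eventually.of_forall hhnn)]
    _ = ENNReal.ofReal (Real.exp (l * a) *
          (∫ s in Set.Icc (-1:ℝ) 1, Real.exp (-l * s^2)) ^ d) := by
        congr 1
        rw [hh, integral_const_mul]
        congr 1
        rw [integral_fintype_prod_volume_eq_pow (ι := Fin d) g, Fintype.card_fin]
        congr 1
        rw [hg, integral_indicator measurableSet_Icc]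


-- A: Stirling-type factorial upper bound
lemma factorial_le_stirling {n : ℕ} (hn : 1 ≤ n) :
    (n.factorial : ℝ) ≤ Real.exp 1 * n * ((n : ℝ) / Real.exp 1) ^ n := by
  have hnpos : (0:ℝ) < n := by exact_mod_cast hn
  have he : (0:ℝ) < Real.exp 1 := Real.exp_pos 1
  have key : Stirling.stirlingSeq n ≤ Real.exp 1 / Real.sqrt 2 := by
    obtain ⟨k, rfl⟩ := Nat.exists_eq_add_of_le hn
    have h := Stirling.stirlingSeq'_antitone (Nat.zero_le k)
    simp only [Function.comp_apply, Nat.succ_eq_add_one, zero_add,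
      Stirling.stirlingSeq_one] at h
    rwa [show k + 1 = 1 + k by omega] at h
  have hden : (0:ℝ) < Real.sqrt (2 * n) * ((n : ℝ) / Real.exp 1) ^ n := by
    apply mul_pos (Real.sqrt_pos.mpr (by positivity))
    positivity
  rw [Stirling.stirlingSeq, div_le_iff₀ hden] at key
  refine key.trans ?_
  have hs2 : Real.sqrt (2 * (n:ℝ)) = Real.sqrt 2 * Real.sqrt n :=
    Real.sqrt_mul (by norm_num) _
  have hsn : Real.sqrt (n:ℝ) ≤ (n:ℝ) := by
    have hn1 : (1:ℝ) ≤ (n:ℝ) := by exact_mod_cast hn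
    have h := Real.sqrt_le_sqrt (show (n:ℝ) ≤ (n:ℝ)^2 by nlinarith)
    rwa [Real.sqrt_sq hnpos.le] at h
  have hs2ne : Real.sqrt 2 ≠ 0 := by positivity
  rw [hs2]
  have heq : Real.exp 1 / Real.sqrt 2 * (Real.sqrt 2 * Real.sqrt n * ((n:ℝ) / Real.exp 1) ^ n)
      = Real.exp 1 * Real.sqrt n * ((n:ℝ) / Real.exp 1) ^ n := by
    field_simp
  rw [heq]
  have : (0:ℝ) ≤ ((n:ℝ) / Real.exp 1) ^ n := by positivity
  nlinarith [mul_le_mul_of_nonneg_right (mul_le_mul_of_nonneg_left hsn he.le) this]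

-- B: geometric-mean bound via log-convexity
lemma gamma_sq_le_factorials {d n M : ℕ} (hnM : n + M = d) :
    Real.Gamma ((d:ℝ)/2 + 1) ^ 2 ≤ (n.factorial : ℝ) * (M.factorial : ℝ) := by
  have hx : (0:ℝ) < (n:ℝ) + 1 := by positivity
  have hy : (0:ℝ) < (M:ℝ) + 1 := by positivity
  have hcvx := Real.convexOn_log_Gamma.2 (Set.mem_Ioi.mpr hx) (Set.mem_Ioi.mpr hy)
    (by norm_num : (0:ℝ) ≤ 1/2) (by norm_num : (0:ℝ) ≤ 1/2) (by norm_num)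
  simp only [smul_eq_mul, Function.comp_apply] at hcvx
  have harg : (1/2 : ℝ) * ((n:ℝ)+1) + (1/2) * ((M:ℝ)+1) = (d:ℝ)/2 + 1 := by
    have : (n:ℝ) + (M:ℝ) = (d:ℝ) := by exact_mod_cast congrArg (Nat.cast : ℕ → ℝ) hnM
    linarith
  rw [harg] at hcvx
  rw [Real.Gamma_nat_eq_factorial, Real.Gamma_nat_eq_factorial] at hcvx
  have hΓpos : 0 < Real.Gamma ((d:ℝ)/2 + 1) := Real.Gamma_pos_of_pos (by positivity)
  have hnf : (0:ℝ) < (n.factorial : ℝ) := by exact_mod_cast Nat.factorial_pos n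
  have hMf : (0:ℝ) < (M.factorial : ℝ) := by exact_mod_cast Nat.factorial_pos M
  have h2 : 2 * Real.log (Real.Gamma ((d:ℝ)/2 + 1)) ≤ Real.log ((n.factorial : ℝ) * (M.factorial : ℝ)) := by
    rw [Real.log_mul hnf.ne' hMf.ne']
    linarith
  calc Real.Gamma ((d:ℝ)/2 + 1) ^ 2
      = Real.exp (2 * Real.log (Real.Gamma ((d:ℝ)/2 + 1))) := by
        rw [two_mul, Real.exp_add, Real.exp_log hΓpos]; ring
    _ ≤ Real.exp (Real.log ((n.factorial : ℝ) * (M.factorial : ℝ))) := Real.exp_le_exp.mpr h2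
    _ = (n.factorial : ℝ) * (M.factorial : ℝ) := Real.exp_log (by positivity)

-- D: eventual exponential domination
lemma eventually_exp_sq_le : ∀ᶠ d : ℕ in atTop, Real.exp 2 * (d:ℝ)^2 ≤ (21/20 : ℝ)^d := by
  have hlog : Filter.Tendsto (fun d : ℕ => (2 + 2 * Real.log d) / d) atTop (nhds 0) := by
    have h1 : Filter.Tendsto (fun d : ℕ => (2:ℝ) / d) atTop (nhds 0) := by
      simpa [div_eq_mul_inv] using (tendsto_one_div_atTop_nhds_zero_nat).const_mul (2:ℝ)
    have h2 : Filter.Tendsto (fun d : ℕ => Real.log d / d) atTop (nhds 0) :=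
      (Real.isLittleO_log_id_atTop.tendsto_div_nhds_zero).comp tendsto_natCast_atTop_atTop
    have := h1.add (h2.const_mul (2:ℝ))
    simp only [add_zero, mul_zero] at this
    convert this using 2 with d
    ring
  have hpos : 0 < Real.log (21/20) := Real.log_pos (by norm_num)
  filter_upwards [hlog.eventually (gt_mem_nhds hpos), eventually_ge_atTop 1] with d hlt hd1
  have hdpos : (0:ℝ) < d := by exact_mod_cast hd1
  have hloglhs : Real.log (Real.exp 2 * (d:ℝ)^2) = 2 + 2 * Real.log d := by
    rw [Real.log_mul (Real.exp_ne_zero 2) (by positivity), Real.log_exp, Real.log_pow]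
    norm_num
  have hle : 2 + 2 * Real.log d ≤ d * Real.log (21/20) := by
    rw [div_lt_iff₀ hdpos] at hlt
    linarith
  have hlhspos : (0:ℝ) < Real.exp 2 * (d:ℝ)^2 := by positivity
  rw [← Real.exp_log hlhspos, ← Real.exp_log (show (0:ℝ) < (21/20:ℝ)^d by positivity)]
  apply Real.exp_le_exp.mpr
  rw [hloglhs, Real.log_pow]
  exact hle

-- E: main eventual bound
lemma r2_sq_le : ∀ᶠ d : ℕ in atTop, r2 d ^ 2 ≤ (3/10 : ℝ) * d := by
  filter_upwards [eventually_exp_sq_le, eventually_ge_atTop 20] with d hD hd20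
  set n := d / 2 with hn
  set M := d - d / 2 with hM
  have hnM : n + M = d := by omega
  have hn1 : 1 ≤ n := by omega
  have hM1 : 1 ≤ M := by omega
  have hnleM : n ≤ M := by omega
  have hd1 : 1 ≤ d := by omega
  have hdpos : (0:ℝ) < d := by positivity
  have hd0 : (d:ℝ) ≠ 0 := hdpos.ne'
  have he : (0:ℝ) < Real.exp 1 := Real.exp_pos 1
  have hΓpos : 0 < Real.Gamma ((d:ℝ)/2 + 1) := Real.Gamma_pos_of_pos (by positivity)
  -- Step 1
  have hΓ2 : Real.Gamma ((d:ℝ)/2 + 1) ^ 2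
      ≤ Real.exp 2 * (d:ℝ)^2 * ((M:ℝ)/Real.exp 1)^d := by
    refine (gamma_sq_le_factorials hnM).trans ?_
    have hA1 := factorial_le_stirling hn1
    have hA2 := factorial_le_stirling hM1
    calc (n.factorial : ℝ) * (M.factorial : ℝ)
        ≤ (Real.exp 1 * n * ((n : ℝ)/Real.exp 1)^n) *
          (Real.exp 1 * M * ((M : ℝ)/Real.exp 1)^M) := by
          apply mul_le_mul hA1 hA2 (by positivity) (by positivity)
      _ ≤ (Real.exp 1 * d * ((M : ℝ)/Real.exp 1)^n) *
          (Real.exp 1 * d * ((M : ℝ)/Real.exp 1)^M) := by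
          gcongr <;> first
            | omega
            | exact_mod_cast Nat.div_le_self d 2
            | exact_mod_cast hnleM
            | positivity
      _ = Real.exp 2 * (d:ℝ)^2 * ((M:ℝ)/Real.exp 1)^(n + M) := by
          have h12 : Real.exp 1 * Real.exp 1 = Real.exp 2 := by
            rw [← Real.exp_add]; norm_num
          rw [pow_add, ← h12]; ring
      _ = Real.exp 2 * (d:ℝ)^2 * ((M:ℝ)/Real.exp 1)^d := by rw [hnM]
  -- Step 2: r2 d ^ 2 as rpow
  have hr2 : r2 d ^ 2 = (4 / Real.pi) *
      (Real.Gamma ((d:ℝ)/2 + 1) ^ 2) ^ ((1:ℝ)/d) := by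
    have e1 : (Real.Gamma ((d:ℝ)/2+1) ^ ((1:ℝ)/d)) ^ (2:ℕ)
        = (Real.Gamma ((d:ℝ)/2+1) ^ (2:ℕ)) ^ ((1:ℝ)/d) := by
      rw [← Real.rpow_natCast (Real.Gamma ((d:ℝ)/2+1) ^ ((1:ℝ)/d)) 2,
          ← Real.rpow_mul hΓpos.le,
          ← Real.rpow_natCast (Real.Gamma ((d:ℝ)/2+1)) 2,
          ← Real.rpow_mul hΓpos.le, mul_comm]
    rw [r2, mul_pow, e1, div_pow, Real.sq_sqrt Real.pi_pos.le]
    norm_num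
  -- Step 3
  have h3 : (Real.Gamma ((d:ℝ)/2 + 1) ^ 2) ^ ((1:ℝ)/d)
      ≤ (21/20 : ℝ) * ((M:ℝ)/Real.exp 1) := by
    have hb : (Real.Gamma ((d:ℝ)/2 + 1) ^ 2) ^ ((1:ℝ)/d)
        ≤ (Real.exp 2 * (d:ℝ)^2 * ((M:ℝ)/Real.exp 1)^d) ^ ((1:ℝ)/d) :=
      Real.rpow_le_rpow (by positivity) hΓ2 (by positivity)
    refine hb.trans ?_
    rw [Real.mul_rpow (by positivity) (by positivity)]
    have hMe : ((((M:ℝ)/Real.exp 1)^d : ℝ)) ^ ((1:ℝ)/d) = (M:ℝ)/Real.exp 1 := by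
      rw [← Real.rpow_natCast ((M:ℝ)/Real.exp 1) d, ← Real.rpow_mul (by positivity)]
      rw [mul_one_div, div_self hd0, Real.rpow_one]
    rw [hMe]
    have h5 : (Real.exp 2 * (d:ℝ)^2) ^ ((1:ℝ)/d) ≤ 21/20 := by
      have h4 : (Real.exp 2 * (d:ℝ)^2) ^ ((1:ℝ)/d) ≤ ((21/20 : ℝ)^d) ^ ((1:ℝ)/d) :=
        Real.rpow_le_rpow (by positivity) hD (by positivity)
      refine h4.trans_eq ?_
      rw [← Real.rpow_natCast ((21:ℝ)/20 : ℝ) d, ← Real.rpow_mul (by norm_num)]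
      rw [mul_one_div, div_self hd0, Real.rpow_one]
    exact mul_le_mul_of_nonneg_right h5 (by positivity)
  -- Step 5: numerics
  have hMle : (M:ℝ) ≤ ((d:ℝ) + 1) / 2 := by
    have : 2 * M ≤ d + 1 := by omega
    have := (Nat.cast_le (α := ℝ)).mpr this
    push_cast at this
    linarith
  have hd21 : ((d:ℝ) + 1) ≤ (21/20) * d := by
    have : (20:ℝ) ≤ d := by exact_mod_cast hd20
    linarith
  have hπ : (3.141592 : ℝ) < Real.pi := Real.pi_gt_d6
  have hel : (2.7182818283 : ℝ) < Real.exp 1 := Real.exp_one_gt_d9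
  have hM2 : (M:ℝ)/Real.exp 1 ≤ (21/40) * d / Real.exp 1 := by
    gcongr
    have h20 : (20:ℝ) ≤ d := by exact_mod_cast hd20
    linarith
  calc r2 d ^ 2 = (4 / Real.pi) * (Real.Gamma ((d:ℝ)/2 + 1) ^ 2) ^ ((1:ℝ)/d) := hr2
    _ ≤ (4 / Real.pi) * ((21/20 : ℝ) * ((M:ℝ)/Real.exp 1)) :=
        mul_le_mul_of_nonneg_left h3 (by positivity)
    _ ≤ (4 / Real.pi) * ((21/20 : ℝ) * ((21/40) * d / Real.exp 1)) :=
        mul_le_mul_of_nonneg_left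
          (mul_le_mul_of_nonneg_left hM2 (by norm_num)) (by positivity)
    _ ≤ (3/10 : ℝ) * d := by
        have hcoef : (4:ℝ) / Real.pi * (21/20 * ((21/40) * (d:ℝ) / Real.exp 1))
            = (1764 / (800 * (Real.pi * Real.exp 1))) * d := by
          field_simp
          ring
        rw [hcoef]
        have hc : (1764:ℝ) / (800 * (Real.pi * Real.exp 1)) ≤ 3/10 := by
          rw [div_le_div_iff₀ (by positivity) (by norm_num)]
          nlinarith [hπ, hel]
        exact mul_le_mul_of_nonneg_right hc hdpos.le


lemma volRatio_le {d : ℕ} (hd : 1 ≤ d) (ha : r2 d ^ 2 ≤ (d:ℝ)/3) :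
    volRatio d ≤ ENNReal.ofReal (Real.exp (-(r2 d ^ 2 - (d : ℝ) / 3) ^ 2 / d)) := by
  have hdpos : (0:ℝ) < d := by exact_mod_cast hd
  set a := r2 d ^ 2 with haa
  have ha0 : 0 ≤ a := sq_nonneg _
  set l : ℝ := 2*((d:ℝ)/3 - a)/d with hl
  have hl0 : 0 ≤ l := by
    apply div_nonneg _ hdpos.le
    have : 0 ≤ (d:ℝ)/3 - a := by linarith
    linarith
  have hnum := vol_num_le d (l := l) (a := a) hl0
  set I : ℝ := ∫ s in Set.Icc (-1:ℝ) 1, Real.exp (-l * s^2) with hI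
  have hI0 : 0 ≤ I := setIntegral_nonneg measurableSet_Icc
    (fun s _ => (Real.exp_pos _).le)
  have hIle : I ≤ 2 + (Real.exp (-l) - 1) * (2/3) := integral_exp_le hl0
  have hreal : Real.exp (l*a) * I^d ≤
      Real.exp (l*a) * (2 + (Real.exp (-l) - 1) * (2/3))^d :=
    mul_le_mul_of_nonneg_left (pow_le_pow_left₀ hI0 hIle d) (Real.exp_pos _).le
  rw [volRatio, cube_volume]
  calc volume {x : Fin d → ℝ | (∑ i, x i ^ 2) ≤ a ∧ ∀ i, |x i| ≤ 1} / (ENNReal.ofReal 2)^d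
      ≤ ENNReal.ofReal (Real.exp (l*a) * I^d) / (ENNReal.ofReal 2)^d :=
        ENNReal.div_le_div_right hnum _
    _ = ENNReal.ofReal (Real.exp (l*a) * I^d / 2^d) := by
        rw [← ENNReal.ofReal_pow (by norm_num : (0:ℝ) ≤ 2),
          ENNReal.ofReal_div_of_pos (by positivity)]
    _ ≤ ENNReal.ofReal (Real.exp (-(a - (d:ℝ)/3)^2 / d)) := by
        apply ENNReal.ofReal_le_ofReal
        have h2d : (0:ℝ) < 2^d := by positivity
        have step1 : Real.exp (l*a) * I^d / 2^d ≤
            Real.exp (l*a) * (2 + (Real.exp (-l) - 1) * (2/3))^d / 2^d := by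
          gcongr
        refine step1.trans ?_
        have heq : Real.exp (l*a) * (2 + (Real.exp (-l) - 1) * (2/3))^d / 2^d
            = Real.exp (l*a) * (1 + (Real.exp (-l) - 1)/3)^d := by
          rw [mul_div_assoc, ← div_pow]
          congr 2
          ring
        rw [heq]
        have := chernoff_scalar hd ha0 ha
        rw [← hl] at this
        exact this

/-- At equal volumes, the fraction of the cube covered by the Euclidean ball tends to
    `0` as the dimension grows, and eventually is at most
    `exp(−(r₂(d)² − d/3)²/d)`. -/
theorem ball_cube_intersection_vanishes :
    Filter.Tendsto volRatio Filter.atTop (nhds 0) ∧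
    ∀ᶠ d in Filter.atTop,
      volRatio d ≤ ENNReal.ofReal (Real.exp (-(r2 d ^ 2 - (d : ℝ) / 3) ^ 2 / d)) := by
  have hEv : ∀ᶠ d in Filter.atTop,
      volRatio d ≤ ENNReal.ofReal (Real.exp (-(r2 d ^ 2 - (d : ℝ) / 3) ^ 2 / d)) := by
    filter_upwards [r2_sq_le, Filter.eventually_ge_atTop 1] with d h3 hd1
    apply volRatio_le hd1
    have hd0 : (0:ℝ) ≤ d := by positivity
    linarith
  refine ⟨?_, hEv⟩
  have hbound : ∀ᶠ d in Filter.atTop,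
      volRatio d ≤ ENNReal.ofReal (Real.exp (-((d:ℝ)/900))) := by
    filter_upwards [hEv, r2_sq_le, Filter.eventually_ge_atTop 1] with d h1 h2 hd1
    refine h1.trans (ENNReal.ofReal_le_ofReal (Real.exp_le_exp.mpr ?_))
    have hdpos : (0:ℝ) < d := by exact_mod_cast hd1
    have h30 : (d:ℝ)/30 ≤ (d:ℝ)/3 - r2 d ^ 2 := by linarith
    have key : ((d:ℝ)/30)^2 ≤ (r2 d ^ 2 - (d:ℝ)/3)^2 := by
      have habs : (r2 d ^ 2 - (d:ℝ)/3)^2 = ((d:ℝ)/3 - r2 d ^ 2)^2 := by ring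
      rw [habs]
      exact pow_le_pow_left₀ (by positivity) h30 2
    have hdiv : (d:ℝ)/900 ≤ (r2 d ^ 2 - (d:ℝ)/3)^2 / d := by
      calc (d:ℝ)/900 = ((d:ℝ)/30)^2/d := by field_simp; ring
        _ ≤ (r2 d ^ 2 - (d:ℝ)/3)^2 / d := by gcongr
    rw [neg_div]
    linarith
  have h0 : Filter.Tendsto (fun d : ℕ => ENNReal.ofReal (Real.exp (-((d:ℝ)/900))))
      Filter.atTop (nhds 0) := by
    rw [show (0:ℝ≥0∞) = ENNReal.ofReal 0 by simp]
    apply ENNReal.tendsto_ofReal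
    apply Real.tendsto_exp_atBot.comp
    have h1 : Filter.Tendsto (fun d : ℕ => (d:ℝ)/900) Filter.atTop Filter.atTop :=
      (tendsto_natCast_atTop_atTop).atTop_div_const (by norm_num)
    exact (tendsto_neg_atTop_atBot).comp h1
  exact tendsto_of_tendsto_of_tendsto_of_le_of_le' tendsto_const_nhds h0
    (Filter.Eventually.of_forall fun d => zero_le) hbound
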